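/- Suppose κ ≥ ℵ₂ is regular, S ⊆ E^κ_{ℵ₀} is stationary, and ⟨C_δ : δ ∈ S⟩ is an ω-bounded C-sequence (each C_δ cofinal in δ of order type ω). Then there exists a club D ⊆ κ such that for every club E ⊆ κ there exist δ ∈ S and β < δ with Φ_D(C_δ) \ β ⊆ E, where Φ_D(x) = {sup(D ∩ η) : η ∈ x, η > min(D)} when sup(D ∩ sup(x)) = sup(x), and Φ_D(x) = x \ sup(D ∩ sup(x)) otherwise. -/

import Mathlib

open Set Ordinal

noncomputable section

abbrev O : Type 1 := Ordinal.{0}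

/-- `ssup A` is the strict supremum of a set of ordinals. -/
def ssup (A : Set O) : O := sSup ((· + 1) '' A)

/-- `acc⁺(A)`: accumulation points below the strict sup. -/
def accP (A : Set O) : Set O := {α | α < ssup A ∧ 0 < α ∧ sSup (A ∩ Iio α) = α}

def accOf (A : Set O) : Set O := A ∩ accP A

def nacc (A : Set O) : Set O := A \ accOf A

def clOf (A : Set O) : Set O := A ∪ accP A

/-- order type of a set of ordinals -/
def otp (A : Set O) : Ordinal.{1} := Ordinal.type (Subrel ((· < ·) : O → O → Prop) (· ∈ A))

/-- lift a small ordinal one universe up -/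
def olift (a : O) : Ordinal.{1} := Ordinal.lift.{1} a

/-- `suc_σ(A)`: elements of `A` whose index in `A` is `j+1` for some `j < σ`. -/
def sucSet (σ : Ordinal.{1}) (A : Set O) : Set O := {β | β ∈ A ∧ ∃ j < σ, otp (A ∩ Iio β) = j + 1}

def UnbIn (A : Set O) (δ : O) : Prop := ∀ α < δ, ∃ β ∈ A, α < β ∧ β < δ

def IsClubIn (C : Set O) (δ : O) : Prop :=
  C ⊆ Iio δ ∧ UnbIn C δ ∧ ∀ α < δ, 0 < α → sSup (C ∩ Iio α) = α → α ∈ C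

def IsStatIn (S : Set O) (δ : O) : Prop :=
  S ⊆ Iio δ ∧ ∀ D, IsClubIn D δ → (S ∩ D).Nonempty

def Ecof (κ : O) (lam : Cardinal.{0}) : Set O := {δ | δ < κ ∧ δ.cof = lam}

def PhiSup (B x : Set O) : Set O :=
  if sSup (x ∩ B) = sSup x then clOf (x ∩ B) else x \ Iio (sSup (x ∩ B))

def PhiD (D x : Set O) : Set O :=
  if sSup (D ∩ Iio (sSup x)) = sSup x then
    {γ | ∃ η ∈ x, sInf D < η ∧ γ = sSup (D ∩ Iio η)}
  else x \ Iio (sSup (D ∩ Iio (sSup x)))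

/-- `cf(δ)`-additive proper ideal on `δ` extending the bounded ideal. -/
def GoodIdeal (δ : O) (J : Set (Set O)) : Prop :=
  (∀ A B : Set O, A ⊆ B → B ∈ J → A ∈ J) ∧
  (Iio δ ∉ J) ∧
  (∀ B : Set O, B ⊆ Iio δ → sSup B < δ → B ∈ J) ∧
  (∀ ξ < (Ordinal.cof δ).ord, ∀ f : O → Set O, (∀ i < ξ, f i ∈ J) → (⋃ i ∈ Iio ξ, f i) ∈ J)

/-- for `κ ≥ ℵ₂` and an ω-bounded C-sequence over `S ⊆ E^κ_{ℵ₀}`,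
some club `D` makes `Φ_D` give tail club-guessing. -/
lemma bdd_of_subset_Iio {A : Set O} {θ : O} (h : A ⊆ Iio θ) : BddAbove A :=
  ⟨θ, fun x hx => (h hx).le⟩

/-- Diagonal lemma: common accumulation point of fewer than `κ` clubs. -/
lemma exists_acc_all {κ : Cardinal.{0}} (hκ : κ.IsRegular) (hω : Cardinal.aleph0 < κ)
    {ι : Type} (hι : Cardinal.mk ι < κ) (A : ι → Set O) (hA : ∀ j, IsClubIn (A j) κ.ord)
    {α : O} (hα : α < κ.ord) :
    ∃ β, α < β ∧ β < κ.ord ∧ ∀ j, sSup (A j ∩ Iio β) = β := by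
  have hcof : κ.ord.cof = κ := hκ.cof_eq
  have hlim : Order.IsSuccLimit κ.ord := Cardinal.isSuccLimit_ord hκ.aleph0_le
  have hnext : ∀ (j : ι) (x : O), ∃ b, x < κ.ord → (b ∈ A j ∧ x < b ∧ b < κ.ord) := by
    intro j x
    by_cases hx : x < κ.ord
    · obtain ⟨b, hb1, hb2, hb3⟩ := (hA j).2.1 x hx
      exact ⟨b, fun _ => ⟨hb1, hb2, hb3⟩⟩
    · exact ⟨0, fun h => absurd h hx⟩
  choose next hnext using hnext
  set g : O → O := fun x => max (x + 1) (⨆ j, next j x) with hg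
  have hgθ : ∀ x < κ.ord, g x < κ.ord := by
    intro x hx
    apply max_lt
    · rw [Ordinal.add_one_eq_succ]; exact hlim.succ_lt hx
    · exact Ordinal.iSup_lt_ord (by rwa [hcof]) fun j => (hnext j x hx).2.2
  have hgx : ∀ x : O, x < g x := by
    intro x
    calc x < x + 1 := by rw [Ordinal.add_one_eq_succ]; exact Order.lt_succ x
    _ ≤ g x := le_max_left _ _
  set h : ℕ → O := fun n => Nat.rec (g α) (fun _ ih => g ih) n with hh
  have hh0 : h 0 = g α := rfl
  have hhs : ∀ n, h (n + 1) = g (h n) := fun n => rfl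
  have hhθ : ∀ n, h n < κ.ord := by
    intro n; induction n with
    | zero => exact hgθ α hα
    | succ n ih => rw [hhs]; exact hgθ _ ih
  have hhmono : ∀ n, h n < h (n + 1) := fun n => (hhs n) ▸ hgx (h n)
  set β : O := ⨆ n, h n with hβ
  have hbdd : BddAbove (Set.range h) := Ordinal.bddAbove_range h
  have hβθ : β < κ.ord := Ordinal.iSup_lt_ord (by rw [hcof, Cardinal.mk_nat]; exact hω) hhθ
  have hhleβ : ∀ n, h n ≤ β := fun n => le_ciSup hbdd n
  have hαβ : α < β := lt_of_lt_of_le (hgx α) (hhleβ 0)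
  refine ⟨β, hαβ, hβθ, fun j => ?_⟩
  apply le_antisymm
  · exact csSup_le' fun x hx => hx.2.le
  · apply le_of_forall_lt
    intro ξ hξ
    obtain ⟨_, ⟨n, rfl⟩, hξn⟩ := exists_lt_of_lt_csSup' (hξ : ξ < sSup (Set.range h))
    have hb1 := hnext j (h n) (hhθ n)
    have hble : next j (h n) ≤ h (n + 1) := by
      rw [hhs]
      exact le_trans (le_ciSup (Ordinal.bddAbove_range _) j) (le_max_right _ _)
    have hbβ : next j (h n) < β :=
      lt_of_le_of_lt hble (lt_of_lt_of_le (hhmono (n+1)) (hhleβ (n+2)))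
    calc ξ < next j (h n) := lt_trans hξn hb1.2.1
    _ ≤ sSup (A j ∩ Iio β) := le_csSup (bdd_of_subset_Iio fun x hx => hx.2) ⟨hb1.1, hbβ⟩

lemma isClubIn_iInter {κ : Cardinal.{0}} (hκ : κ.IsRegular) (hω : Cardinal.aleph0 < κ)
    {ι : Type} (hι : Cardinal.mk ι < κ) (A : ι → Set O) (hA : ∀ j, IsClubIn (A j) κ.ord) :
    IsClubIn (Iio κ.ord ∩ ⋂ j, A j) κ.ord := by
  refine ⟨fun x hx => hx.1, ?_, ?_⟩
  · intro α hα
    obtain ⟨β, h1, h2, h3⟩ := exists_acc_all hκ hω hι A hA hα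
    refine ⟨β, ⟨h2, ?_⟩, h1, h2⟩
    exact mem_iInter.2 fun j => (hA j).2.2 β h2 (lt_of_le_of_lt (zero_le : (0:O) ≤ α) h1) (h3 j)
  · intro α hα h0 hsup
    refine ⟨hα, mem_iInter.2 fun j => (hA j).2.2 α hα h0 ?_⟩
    apply le_antisymm
    · exact csSup_le' fun x hx => hx.2.le
    · apply le_of_forall_lt
      intro ξ hξ
      rw [← hsup] at hξ
      obtain ⟨b, hb, hξb⟩ := exists_lt_of_lt_csSup' hξ
      exact lt_of_lt_of_le hξb (le_csSup (bdd_of_subset_Iio fun x hx => hx.2)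
        ⟨mem_iInter.1 hb.1.2 j, hb.2⟩)

lemma isClubIn_Iio {κ : Cardinal.{0}} (hκ : κ.IsRegular) :
    IsClubIn (Iio κ.ord) κ.ord := by
  have hlim : Order.IsSuccLimit κ.ord := Cardinal.isSuccLimit_ord hκ.aleph0_le
  refine ⟨subset_rfl, fun α hα => ⟨α + 1, ?_, ?_, ?_⟩, fun α hα _ _ => hα⟩ <;>
    first
      | (rw [Ordinal.add_one_eq_succ]; exact hlim.succ_lt hα)
      | (rw [Ordinal.add_one_eq_succ]; exact Order.lt_succ α)

lemma isClubIn_inter {κ : Cardinal.{0}} (hκ : κ.IsRegular) (hω : Cardinal.aleph0 < κ)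
    {D E : Set O} (hD : IsClubIn D κ.ord) (hE : IsClubIn E κ.ord) :
    IsClubIn (D ∩ E) κ.ord := by
  have hι : Cardinal.mk Bool < κ := lt_trans (Cardinal.lt_aleph0_of_finite Bool) hω
  have h := isClubIn_iInter hκ hω hι (fun b => if b then D else E)
    (fun b => by cases b <;> simpa)
  have heq : (Iio κ.ord ∩ ⋂ b : Bool, if b then D else E) = D ∩ E := by
    ext x
    simp only [mem_inter_iff, mem_iInter, Bool.forall_bool, if_true, if_false]
    exact ⟨fun h => ⟨h.2.2, h.2.1⟩, fun h => ⟨hD.1 h.1, h.2, h.1⟩⟩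
  rwa [heq] at h

/-- accumulation points (within `Iio θ`) of a set -/
def AccSet (D : Set O) (θ : O) : Set O := {α | α < θ ∧ 0 < α ∧ sSup (D ∩ Iio α) = α}

lemma isClubIn_AccSet {κ : Cardinal.{0}} (hκ : κ.IsRegular) (hω : Cardinal.aleph0 < κ)
    {D : Set O} (hD : IsClubIn D κ.ord) : IsClubIn (AccSet D κ.ord) κ.ord := by
  refine ⟨fun x hx => hx.1, ?_, ?_⟩
  · intro α hα
    have hι : Cardinal.mk Unit < κ := lt_trans (Cardinal.lt_aleph0_of_finite Unit) hω
    obtain ⟨β, h1, h2, h3⟩ := exists_acc_all hκ hω hι (fun _ => D) (fun _ => hD) hα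
    exact ⟨β, ⟨h2, lt_of_le_of_lt (zero_le : (0:O) ≤ α) h1, h3 ()⟩, h1, h2⟩
  · intro α hα h0 hsup
    refine ⟨hα, h0, le_antisymm (csSup_le' fun x hx => hx.2.le) (le_of_forall_lt fun ξ hξ => ?_)⟩
    rw [← hsup] at hξ
    obtain ⟨γ, hγ, hξγ⟩ := exists_lt_of_lt_csSup' hξ
    have : ξ < sSup (D ∩ Iio γ) := by rw [hγ.1.2.2]; exact hξγ
    obtain ⟨d, hd, hξd⟩ := exists_lt_of_lt_csSup' this
    exact lt_of_lt_of_le hξd (le_csSup (bdd_of_subset_Iio fun x hx => hx.2)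
      ⟨hd.1, mem_Iio.2 (lt_trans (mem_Iio.1 hd.2) (mem_Iio.1 hγ.2))⟩)

/-- transfinite iteration of club-shrinking -/
def Dseq (θ : O) (Efn : Set O → Set O) : O → Set O :=
  Ordinal.lt_wf.fix fun i rec =>
    Iio θ ∩ ⋂ j : {j : O // j < i}, (rec j j.2 ∩ Efn (rec j j.2))

lemma Dseq_eq (θ : O) (Efn : Set O → Set O) (i : O) :
    Dseq θ Efn i =
      Iio θ ∩ ⋂ j : {j : O // j < i}, (Dseq θ Efn j ∩ Efn (Dseq θ Efn j)) := by
  rw [Dseq, WellFounded.fix_eq]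

lemma Dseq_subset_Iio (θ : O) (Efn : Set O → Set O) (i : O) : Dseq θ Efn i ⊆ Iio θ := by
  rw [Dseq_eq]; exact fun x hx => hx.1

lemma Dseq_step_subset (θ : O) (Efn : Set O → Set O) {j i : O} (h : j < i) :
    Dseq θ Efn i ⊆ Dseq θ Efn j ∩ Efn (Dseq θ Efn j) := by
  rw [Dseq_eq θ Efn i]
  exact fun x hx => mem_iInter.1 hx.2 ⟨j, h⟩

lemma Dseq_anti (θ : O) (Efn : Set O → Set O) {j i : O} (h : j ≤ i) :
    Dseq θ Efn i ⊆ Dseq θ Efn j := by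
  rcases eq_or_lt_of_le h with rfl | h
  · exact subset_rfl
  · exact fun x hx => (Dseq_step_subset θ Efn h hx).1

lemma Dseq_club {κ : Cardinal.{0}} (hκ : κ.IsRegular) (hω : Cardinal.aleph0 < κ)
    (Efn : Set O → Set O) (hEfn : ∀ D, IsClubIn D κ.ord → IsClubIn (Efn D) κ.ord)
    {i : O} (hi : i.card < κ) : IsClubIn (Dseq κ.ord Efn i) κ.ord := by
  induction i using WellFoundedLT.induction with
  | ind i IH =>
    have hA : ∀ j : {j : O // j < i},
        IsClubIn (Dseq κ.ord Efn j ∩ Efn (Dseq κ.ord Efn j)) κ.ord := by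
      intro ⟨j, hj⟩
      have hjc : j.card < κ := lt_of_le_of_lt (Ordinal.card_le_card hj.le) hi
      have h1 := IH j hj hjc
      exact isClubIn_inter hκ hω h1 (hEfn _ h1)
    have hι : Cardinal.mk i.ToType < κ := by rwa [Cardinal.mk_toType]
    have h := isClubIn_iInter hκ hω hι
      (fun t => Dseq κ.ord Efn ((Ordinal.ToType.mk (o := i)).symm t) ∩
        Efn (Dseq κ.ord Efn ((Ordinal.ToType.mk (o := i)).symm t)))
      (fun t => hA ⟨_, ((Ordinal.ToType.mk (o := i)).symm t).2⟩)
    have heq : (Iio κ.ord ∩ ⋂ t : i.ToType,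
        (Dseq κ.ord Efn ((Ordinal.ToType.mk (o := i)).symm t) ∩
          Efn (Dseq κ.ord Efn ((Ordinal.ToType.mk (o := i)).symm t)))) = Dseq κ.ord Efn i := by
      rw [Dseq_eq κ.ord Efn i]
      apply congrArg (Iio κ.ord ∩ ·)
      ext x
      simp only [mem_iInter]
      constructor
      · intro hx ⟨j, hj⟩
        have := hx (Ordinal.ToType.mk (o := i) ⟨j, hj⟩)
        rwa [OrderIso.symm_apply_apply] at this
      · intro hx t
        exact hx ⟨_, ((Ordinal.ToType.mk (o := i)).symm t).2⟩
    rwa [heq] at h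

theorem statement5 (κ : Cardinal.{0}) (hκ : κ.IsRegular) (hκ2 : Cardinal.aleph 2 ≤ κ)
    (S : Set O) (hSsub : S ⊆ Ecof κ.ord Cardinal.aleph0) (hS : IsStatIn S κ.ord)
    (C : O → Set O)
    (hC : ∀ δ ∈ S, C δ ⊆ Iio δ ∧ UnbIn (C δ) δ ∧ otp (C δ) = olift Ordinal.omega0) :
    ∃ D, IsClubIn D κ.ord ∧
      ∀ E, IsClubIn E κ.ord → ∃ δ ∈ S, ∃ β < δ, PhiD D (C δ) \ Iio β ⊆ E := by
  classical
  by_contra hcon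
  push_neg at hcon
  obtain ⟨Efn, hEfn⟩ : ∃ Efn : Set O → Set O, ∀ D, IsClubIn D κ.ord →
      IsClubIn (Efn D) κ.ord ∧ (∀ δ ∈ S, ∀ β < δ, ¬(PhiD D (C δ) \ Iio β ⊆ Efn D)) := by
    refine ⟨fun D => if h : IsClubIn D κ.ord then (hcon D h).choose else Iio κ.ord,
      fun D hD => ?_⟩
    simp only [dif_pos hD]
    exact ⟨(hcon D hD).choose_spec.1, (hcon D hD).choose_spec.2⟩
  have hω : Cardinal.aleph0 < κ :=
    lt_of_lt_of_le (by rw [← Cardinal.aleph_zero]; exact Cardinal.aleph_lt_aleph.2 zero_lt_two) hκ2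
  have h12 : Cardinal.aleph 1 < κ :=
    lt_of_lt_of_le (Cardinal.aleph_lt_aleph.2 one_lt_two) hκ2
  set w1 : O := (Cardinal.aleph 1).ord with hw1def
  have hω1lim : Order.IsSuccLimit w1 := Cardinal.isSuccLimit_ord (Cardinal.aleph0_le_aleph 1)
  have hEfnclub : ∀ D, IsClubIn D κ.ord → IsClubIn (Efn D) κ.ord := fun D hD => (hEfn D hD).1
  have hDinf : IsClubIn (Dseq κ.ord Efn w1) κ.ord :=
    Dseq_club hκ hω Efn hEfnclub (by rw [hw1def, Cardinal.card_ord]; exact h12)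
  obtain ⟨δ, hδS, hδθ, hδ0, hδsup⟩ := hS.2 _ (isClubIn_AccSet hκ hω hDinf)
  obtain ⟨hCsub, hCunb, hCotp⟩ := hC δ hδS
  have hsupC : sSup (C δ) = δ := by
    apply le_antisymm (csSup_le' fun x hx => (mem_Iio.1 (hCsub hx)).le)
    apply le_of_forall_lt
    intro ξ hξ
    obtain ⟨b, hb, hξb, hbδ⟩ := hCunb ξ hξ
    exact lt_of_lt_of_le hξb (le_csSup (bdd_of_subset_Iio hCsub) hb)
  -- countability of C δ
  have hcard : Cardinal.mk ↥(C δ) = Cardinal.aleph0 := by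
    have h1 : (otp (C δ)).card = (olift Ordinal.omega0).card := congrArg Ordinal.card hCotp
    rw [otp, Ordinal.card_type, olift, ← Ordinal.lift_card, Ordinal.card_omega0,
      Cardinal.lift_aleph0] at h1
    exact h1
  have hcnt : (C δ).Countable := Set.countable_coe_iff.2 (Cardinal.mk_le_aleph0_iff.1 hcard.le)
  have hne : (C δ).Nonempty := by
    obtain ⟨b, hb, -, -⟩ := hCunb 0 hδ0
    exact ⟨b, hb⟩
  obtain ⟨g, hg⟩ := hcnt.exists_eq_range hne
  -- stabilization of i ↦ sSup (Dseq i ∩ Iio η)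
  have hanti : ∀ (η : O) {i₁ i₂ : O}, i₁ ≤ i₂ →
      sSup (Dseq κ.ord Efn i₂ ∩ Iio η) ≤ sSup (Dseq κ.ord Efn i₁ ∩ Iio η) := by
    intro η i₁ i₂ h
    exact csSup_le' fun x hx =>
      le_csSup (bdd_of_subset_Iio fun y hy => hy.2) ⟨Dseq_anti κ.ord Efn h hx.1, hx.2⟩
  have hstab : ∀ η : O, ∃ i₀ < w1, ∀ i, i₀ ≤ i → i < w1 →
      sSup (Dseq κ.ord Efn i ∩ Iio η) = sSup (Dseq κ.ord Efn i₀ ∩ Iio η) := by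
    intro η
    set V : Set O := (fun i => sSup (Dseq κ.ord Efn i ∩ Iio η)) '' Iio w1 with hV
    have hVne : V.Nonempty := ⟨_, Set.mem_image_of_mem _ (mem_Iio.2 hω1lim.pos)⟩
    obtain ⟨i₀, hi₀, hival⟩ := csInf_mem hVne
    have hival' : sSup (Dseq κ.ord Efn i₀ ∩ Iio η) = sInf V := hival
    refine ⟨i₀, hi₀, fun i hle hi => le_antisymm (hanti η hle) ?_⟩
    rw [hival']
    exact csInf_le (OrderBot.bddBelow V) ⟨i, hi, rfl⟩
  choose iFn hiFn1 hiFn2 using hstab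
  set istar : O := ⨆ n, iFn (g n) with histardef
  have histar : istar < w1 := by
    apply Ordinal.iSup_lt_ord _ (fun n => hiFn1 (g n))
    rw [hw1def, Cardinal.isRegular_aleph_one.cof_eq, Cardinal.mk_nat]
    rw [← Cardinal.aleph_zero]
    exact Cardinal.aleph_lt_aleph.2 zero_lt_one
  have hsucc : istar + 1 < w1 := by
    rw [Ordinal.add_one_eq_succ]; exact hω1lim.succ_lt histar
  have hcard1 : istar.card < κ := lt_trans (Cardinal.lt_ord.1 (hw1def ▸ histar)) h12
  have hcard2 : (istar + 1).card < κ := lt_trans (Cardinal.lt_ord.1 (hw1def ▸ hsucc)) h12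
  have hDstar : IsClubIn (Dseq κ.ord Efn istar) κ.ord := Dseq_club hκ hω Efn hEfnclub hcard1
  have hDsucc : IsClubIn (Dseq κ.ord Efn (istar + 1)) κ.ord := Dseq_club hκ hω Efn hEfnclub hcard2
  -- δ is a limit of Dseq istar
  have hneinf : (Dseq κ.ord Efn w1 ∩ Iio δ).Nonempty := by
    by_contra h
    rw [not_nonempty_iff_eq_empty] at h
    rw [h, csSup_empty] at hδsup
    exact absurd hδsup (by simpa using hδ0.ne)
  have hsupδstar : sSup (Dseq κ.ord Efn istar ∩ Iio δ) = δ := by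
    apply le_antisymm (csSup_le' fun x hx => (mem_Iio.1 hx.2).le)
    exact le_trans (le_of_eq hδsup.symm)
      (csSup_le_csSup (bdd_of_subset_Iio fun x hx => hx.2) hneinf
        (fun x hx => ⟨Dseq_anti κ.ord Efn histar.le hx.1, hx.2⟩))
  have hphi : PhiD (Dseq κ.ord Efn istar) (C δ) =
      {γ | ∃ η ∈ C δ, sInf (Dseq κ.ord Efn istar) < η ∧
        γ = sSup (Dseq κ.ord Efn istar ∩ Iio η)} := by
    rw [PhiD, hsupC, if_pos hsupδstar]
  obtain ⟨d₀, hd₀⟩ := hneinf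
  have hβδ : d₀ + 1 < δ := by
    have hle : d₀ + 1 ≤ δ := by
      rw [Ordinal.add_one_eq_succ]; exact Order.succ_le_of_lt (mem_Iio.1 hd₀.2)
    rcases hle.lt_or_eq with h | h
    · exact h
    · exfalso
      have hub : sSup (Dseq κ.ord Efn w1 ∩ Iio δ) ≤ d₀ := by
        apply csSup_le'
        intro x hx
        have hxδ := mem_Iio.1 hx.2
        rw [← h, Ordinal.add_one_eq_succ, Order.lt_succ_iff] at hxδ
        exact hxδ
      rw [hδsup] at hub
      exact (mem_Iio.1 hd₀.2).not_ge hub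
  have hfail := (hEfn _ hDstar).2 δ hδS (d₀ + 1) hβδ
  obtain ⟨γ, hγmem, hγE⟩ := Set.not_subset.1 hfail
  obtain ⟨hγPhi, hγβ⟩ := hγmem
  rw [hphi] at hγPhi
  obtain ⟨η, hηC, hηinf, hγval⟩ := hγPhi
  have hβγ : d₀ + 1 ≤ γ := not_lt.1 hγβ
  -- the stabilized value
  obtain ⟨n, hn⟩ : ∃ n, g n = η := by
    rw [hg] at hηC; exact hηC
  have hiFnle : iFn η ≤ istar := by
    rw [← hn, histardef]; exact le_ciSup (Ordinal.bddAbove_range _) n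
  have h1 := hiFn2 η istar hiFnle histar
  have h2 := hiFn2 η (istar + 1) (le_trans hiFnle (le_self_add)) hsucc
  have hγsucc : γ = sSup (Dseq κ.ord Efn (istar + 1) ∩ Iio η) :=
    hγval.trans (h2.trans h1.symm).symm
  have hγη : γ ≤ η := by
    rw [hγval]; exact csSup_le' fun x hx => (mem_Iio.1 hx.2).le
  have hd₀γ : d₀ < γ :=
    lt_of_lt_of_le (by rw [Ordinal.add_one_eq_succ]; exact Order.lt_succ d₀) hβγ
  have hγ0 : 0 < γ := lt_of_le_of_lt (zero_le : (0:O) ≤ d₀) hd₀γ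
  have hγθ : γ < κ.ord := lt_of_le_of_lt hγη (lt_trans (mem_Iio.1 (hCsub hηC)) hδθ)
  have hγDsucc : γ ∈ Dseq κ.ord Efn (istar + 1) := by
    by_cases hmem : γ ∈ Dseq κ.ord Efn (istar + 1) ∩ Iio η
    · exact hmem.1
    · apply hDsucc.2.2 γ hγθ hγ0
      have hss : Dseq κ.ord Efn (istar + 1) ∩ Iio γ = Dseq κ.ord Efn (istar + 1) ∩ Iio η := by
        apply Set.Subset.antisymm
        · exact fun x hx => ⟨hx.1, mem_Iio.2 (lt_of_lt_of_le (mem_Iio.1 hx.2) hγη)⟩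
        · intro x hx
          have hxle : x ≤ γ := by
            rw [hγsucc]
            exact le_csSup (bdd_of_subset_Iio fun y hy => hy.2) hx
          have hxne : x ≠ γ := fun hxx => hmem (hxx ▸ hx)
          exact ⟨hx.1, mem_Iio.2 (lt_of_le_of_ne hxle hxne)⟩
      rw [hss, ← hγsucc]
  have hfinal : γ ∈ Efn (Dseq κ.ord Efn istar) :=
    (Dseq_step_subset κ.ord Efn
      (by rw [Ordinal.add_one_eq_succ]; exact Order.lt_succ istar) hγDsucc).2
  exact hγE hfinal
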